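/- Let H be a complex Hilbert space and let a, b, x be bounded operators on H with a unitary. Let ξ ∈ H be a unit vector with aξ = λξ for some λ ∈ ℂ. Suppose that for every unit vector ζ ∈ H the matrix Q_{p_ζ} is positive semidefinite, where p_ζ is the vector state p_ζ(T) = ⟪Tζ, ζ⟫. Then for every unit vector η orthogonal to ξ: |⟪(x − ab)η, ξ⟫ + ⟪(x − ba)ξ, η⟫|² ≤ (1 − |⟪bξ, ξ⟫|²) · ‖(λ·I − a)η‖². -/

import Mathlib

open scoped ComplexOrder ComplexInnerProductSpace Matrix MatrixOrder
open Filter Topology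

lemma cs3 {n : Type*} [Fintype n] [DecidableEq n] (M : Matrix n n ℂ) (hM : M.PosSemidef)
    (v w : n → ℂ) :
    ‖dotProduct (star v) (M *ᵥ w)‖ ^ 2 ≤
      (dotProduct (star v) (M *ᵥ v)).re * (dotProduct (star w) (M *ᵥ w)).re := by
  have hS : CFC.sqrt M * CFC.sqrt M = M := CFC.sqrt_mul_sqrt_self M hM.nonneg
  have hSh : (CFC.sqrt M)ᴴ = CFC.sqrt M := (Matrix.nonneg_iff_posSemidef.mp (CFC.sqrt_nonneg M)).1
  have key : ∀ u z : n → ℂ, dotProduct (star u) (M *ᵥ z)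
      = dotProduct (star (CFC.sqrt M *ᵥ u)) (CFC.sqrt M *ᵥ z) := by
    intro u z
    rw [Matrix.star_mulVec, hSh, ← Matrix.dotProduct_mulVec, Matrix.mulVec_mulVec, hS]
  rw [key v w, key v v, key w w]
  set u' : EuclideanSpace ℂ n := (WithLp.equiv 2 (n → ℂ)).symm (CFC.sqrt M *ᵥ v)
  set z' : EuclideanSpace ℂ n := (WithLp.equiv 2 (n → ℂ)).symm (CFC.sqrt M *ᵥ w)
  have h1 : ⟪u', z'⟫ = dotProduct (star (CFC.sqrt M *ᵥ v)) (CFC.sqrt M *ᵥ w) := by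
    rw [dotProduct_comm]; rfl
  have h2 : ⟪u', u'⟫ = dotProduct (star (CFC.sqrt M *ᵥ v)) (CFC.sqrt M *ᵥ v) := by
    rw [dotProduct_comm]; rfl
  have h3 : ⟪z', z'⟫ = dotProduct (star (CFC.sqrt M *ᵥ w)) (CFC.sqrt M *ᵥ w) := by
    rw [dotProduct_comm]; rfl
  rw [← h1, ← h2, ← h3]
  have hcs := norm_inner_le_norm (𝕜 := ℂ) u' z'
  have hu : (⟪u', u'⟫ : ℂ).re = ‖u'‖ ^ 2 := by
    rw [← RCLike.re_to_complex, @inner_self_eq_norm_sq ℂ]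
  have hz : (⟪z', z'⟫ : ℂ).re = ‖z'‖ ^ 2 := by
    rw [← RCLike.re_to_complex, @inner_self_eq_norm_sq ℂ]
  rw [hu, hz]
  calc ‖(⟪u', z'⟫ : ℂ)‖ ^ 2 ≤ (‖u'‖ * ‖z'‖) ^ 2 := by
        apply pow_le_pow_left₀ (norm_nonneg _) hcs
    _ = ‖u'‖ ^ 2 * ‖z'‖ ^ 2 := by ring

lemma Qkey (α β γ : ℂ)
    (h : (!![1, α, γ; (starRingEnd ℂ) α, 1, β; (starRingEnd ℂ) γ, (starRingEnd ℂ) β, 1] :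
      Matrix (Fin 3) (Fin 3) ℂ).PosSemidef) :
    ‖γ - α * β‖ ^ 2 ≤ (1 - ‖α‖ ^ 2) * (1 - ‖β‖ ^ 2)
      ∧ 0 ≤ 1 - ‖β‖ ^ 2 := by
  set M : Matrix (Fin 3) (Fin 3) ℂ :=
    !![1, α, γ; (starRingEnd ℂ) α, 1, β; (starRingEnd ℂ) γ, (starRingEnd ℂ) β, 1] with hMdef
  set v : Fin 3 → ℂ := ![1, -(starRingEnd ℂ) α, 0] with hv
  set w : Fin 3 → ℂ := ![0, -β, 1] with hw
  have hvv : (dotProduct (star v) (M *ᵥ v)).re = 1 - ‖α‖ ^ 2 := by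
    simp [hMdef, hv, Matrix.mulVec, dotProduct, Fin.sum_univ_three, Complex.sq_norm,
      Complex.normSq_apply, Complex.mul_re, Complex.mul_im]
    ring
  have hww : (dotProduct (star w) (M *ᵥ w)).re = 1 - ‖β‖ ^ 2 := by
    simp [hMdef, hw, Matrix.mulVec, dotProduct, Fin.sum_univ_three, Complex.sq_norm,
      Complex.normSq_apply, Complex.mul_re, Complex.mul_im]
    ring
  have hvw : dotProduct (star v) (M *ᵥ w) = γ - α * β := by
    simp [hMdef, hv, hw, Matrix.mulVec, dotProduct, Fin.sum_univ_three]
    ring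
  constructor
  · have := cs3 M h v w
    rwa [hvv, hww, hvw] at this
  · have := h.re_dotProduct_nonneg w
    rw [RCLike.re_to_complex] at this
    rwa [hww] at this

lemma exp_inner {H : Type*} [NormedAddCommGroup H] [InnerProductSpace ℂ H]
    (T : H →L[ℂ] H) (u v : H) (s r : ℝ) :
    ⟪(s:ℂ) • u + (r:ℂ) • v, T ((s:ℂ) • u + (r:ℂ) • v)⟫
      = (s:ℂ)^2 * ⟪u, T u⟫ + (s:ℂ)*(r:ℂ) * ⟪u, T v⟫ + (s:ℂ)*(r:ℂ) * ⟪v, T u⟫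
        + (r:ℂ)^2 * ⟪v, T v⟫ := by
  simp only [map_add, map_smul, inner_add_left, inner_add_right, inner_smul_left,
    inner_smul_right, Complex.conj_ofReal]
  ring


/-- The 3×3 matrix `Q_p` associated with operators `a, b, x` and a functional
`p`; its rows are `(1, p a, p x)`, `(conj (p a), 1, p b)`,
`(conj (p x), conj (p b), 1)`. -/
def QmatOp {B : Type*} (p : B → ℂ) (a b x : B) : Matrix (Fin 3) (Fin 3) ℂ :=
  !![1, p a, p x;
     (starRingEnd ℂ) (p a), 1, p b;
     (starRingEnd ℂ) (p x), (starRingEnd ℂ) (p b), 1]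

/- Note: `⟪ζ, T ζ⟫` (Mathlib's inner product, conjugate-linear in the first
slot) equals the vector state `⟪Tζ, ζ⟫` written in the convention of the
paper, where the inner product is linear in its first slot. -/
theorem stmt_10 {H : Type*} [NormedAddCommGroup H] [InnerProductSpace ℂ H]
    [CompleteSpace H] (a b x : H →L[ℂ] H)
    (ha : star a * a = 1 ∧ a * star a = 1)
    (ξ : H) (hξ : ‖ξ‖ = 1) (l : ℂ) (haξ : a ξ = l • ξ)
    (hQ : ∀ ζ : H, ‖ζ‖ = 1 → (QmatOp (fun T : H →L[ℂ] H => ⟪ζ, T ζ⟫) a b x).PosSemidef) :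
    ∀ η : H, ‖η‖ = 1 → ⟪ξ, η⟫ = 0 →
      ‖⟪ξ, (x - a * b) η⟫ + ⟪η, (x - b * a) ξ⟫‖ ^ 2 ≤
        (1 - ‖⟪ξ, b ξ⟫‖ ^ 2) * ‖(l • (1 : H →L[ℂ] H) - a) η‖ ^ 2 := by
  intro η hη hortho
  have hba : ⟪η, ξ⟫ = 0 := by rw [← inner_conj_symm, hortho, map_zero]
  have hξξ : ⟪ξ, ξ⟫ = 1 := by
    rw [inner_self_eq_norm_sq_to_K, hξ]; norm_num
  have hηη : ⟪η, η⟫ = 1 := by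
    rw [inner_self_eq_norm_sq_to_K, hη]; norm_num
  -- key unitarity facts
  have hiso : ∀ u : H, ⟪a u, a u⟫ = ⟪u, u⟫ := by
    intro u
    have h1 : ⟪(ContinuousLinearMap.adjoint a) (a u), u⟫ = ⟪a u, a u⟫ := by
      have := ContinuousLinearMap.adjoint_inner_left a u (a u)
      simpa using this
    have h2 : (ContinuousLinearMap.adjoint a) (a u) = u := by
      rw [← ContinuousLinearMap.star_eq_adjoint, ← ContinuousLinearMap.mul_apply, ha.1,
        ContinuousLinearMap.one_apply]
    rw [h2] at h1
    exact h1.symm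
  have hl1 : ((starRingEnd ℂ) l) * l = 1 := by
    have := hiso ξ
    rw [haξ, inner_smul_left, inner_smul_right, hξξ] at this
    simpa using this
  have habs_l : ‖l‖ ^ 2 = 1 := by
    have h : (Complex.normSq l : ℂ) = 1 := by rw [Complex.normSq_eq_conj_mul_self, hl1]
    rw [Complex.sq_norm]
    exact_mod_cast h
  have hstarξ : (star a) ξ = ((starRingEnd ℂ) l) • ξ := by
    have h2 : a (((starRingEnd ℂ) l) • ξ) = ξ := by
      rw [map_smul, haξ, smul_smul, hl1, one_smul]
    calc (star a) ξ = (star a) (a (((starRingEnd ℂ) l) • ξ)) := by rw [h2]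
      _ = (star a * a) (((starRingEnd ℂ) l) • ξ) := rfl
      _ = ((starRingEnd ℂ) l) • ξ := by rw [ha.1, ContinuousLinearMap.one_apply]
  -- inner product values of a
  have hax : ⟪ξ, a ξ⟫ = l := by rw [haξ, inner_smul_right, hξξ, mul_one]
  have haxη : ⟪η, a ξ⟫ = 0 := by rw [haξ, inner_smul_right, hba, mul_zero]
  have haηx : ⟪ξ, a η⟫ = 0 := by
    rw [← ContinuousLinearMap.adjoint_inner_left, ← ContinuousLinearMap.star_eq_adjoint,
      hstarξ, inner_smul_left, hortho, mul_zero]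
  -- notation
  set β₀ : ℂ := ⟪ξ, b ξ⟫ with hβ₀
  set b₁ : ℂ := ⟪ξ, b η⟫ with hb₁
  set b₂ : ℂ := ⟪η, b ξ⟫ with hb₂
  set b₃ : ℂ := ⟪η, b η⟫ with hb₃
  set g₁ : ℂ := ⟪ξ, x η⟫ with hg₁
  set g₂ : ℂ := ⟪η, x ξ⟫ with hg₂
  set g₃ : ℂ := ⟪η, x η⟫ with hg₃
  set μ : ℂ := ⟪η, a η⟫ with hμ
  set K : ℝ := ‖(l • (1 : H →L[ℂ] H) - a) η‖ ^ 2 with hK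
  set A : ℂ := g₁ - l * b₁ with hA
  set B : ℂ := g₂ - l * b₂ with hB
  -- goal terms
  have hab1 : ⟪ξ, (a * b) η⟫ = l * b₁ := by
    have h1 : ⟪ξ, a (b η)⟫ = ⟪(ContinuousLinearMap.adjoint a) ξ, b η⟫ :=
      (ContinuousLinearMap.adjoint_inner_left a (b η) ξ).symm
    rw [ContinuousLinearMap.mul_apply, h1, ← ContinuousLinearMap.star_eq_adjoint, hstarξ,
      inner_smul_left, hb₁]
    simp
  have hgA : ⟪ξ, (x - a * b) η⟫ = A := by
    rw [ContinuousLinearMap.sub_apply, inner_sub_right, hab1, hA, hg₁]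
  have hgB : ⟪η, (x - b * a) ξ⟫ = B := by
    rw [ContinuousLinearMap.sub_apply, inner_sub_right, ContinuousLinearMap.mul_apply,
      haξ, map_smul, inner_smul_right, hB, hg₂, hb₂]
  -- g₀ = l * β₀
  have hg0 : ⟪ξ, x ξ⟫ = l * β₀ := by
    have hQξ := Qkey (⟪ξ, a ξ⟫) (⟪ξ, b ξ⟫) (⟪ξ, x ξ⟫) (hQ ξ hξ)
    rw [hax] at hQξ
    have h0 : ‖⟪ξ, x ξ⟫ - l * β₀‖ ^ 2 ≤ 0 := by
      have := hQξ.1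
      rw [habs_l] at this
      simpa using this
    have h1 : ‖⟪ξ, x ξ⟫ - l * β₀‖ = 0 := by
      nlinarith [norm_nonneg (⟪ξ, x ξ⟫ - l * β₀)]
    exact sub_eq_zero.mp (norm_eq_zero.mp h1)
  -- norm facts
  have hnorm_eq_one : ∀ u : H, ⟪u, u⟫ = 1 → ‖u‖ = 1 := by
    intro u hu
    have h3 : (⟪u, u⟫ : ℂ).re = ‖u‖ ^ 2 := by
      rw [← RCLike.re_to_complex, @inner_self_eq_norm_sq ℂ]
    rw [hu] at h3
    have h4 : ‖u‖ ^ 2 = 1 := by simpa using h3.symm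
    have h5 : (‖u‖ - 1) * (‖u‖ + 1) = 0 := by linear_combination h4
    rcases mul_eq_zero.mp h5 with h6 | h6
    · linarith
    · linarith [norm_nonneg u]
  have haη1 : ‖a η‖ = 1 := by
    have h := hiso η
    rw [hηη] at h
    exact hnorm_eq_one _ h
  have habsl : ‖l‖ = 1 := by
    have h5 : (‖l‖ - 1) * (‖l‖ + 1) = 0 := by linear_combination habs_l
    rcases mul_eq_zero.mp h5 with h6 | h6
    · linarith
    · linarith [norm_nonneg l]
  have hlre : l.re ^ 2 + l.im ^ 2 = 1 := by
    have := habs_l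
    rw [Complex.sq_norm, Complex.normSq_apply] at this
    linear_combination this
  -- K value
  have hKval : K = 2 - 2 * ((starRingEnd ℂ) l * μ).re := by
    have happ : (l • (1 : H →L[ℂ] H) - a) η = l • η - a η := by
      simp [ContinuousLinearMap.sub_apply, ContinuousLinearMap.smul_apply,
        ContinuousLinearMap.one_apply]
    have hsm : ⟪l • η, a η⟫ = (starRingEnd ℂ) l * μ := by
      rw [inner_smul_left, hμ]
    rw [hK, happ, @norm_sub_sq ℂ, hsm, haη1, norm_smul, hη, habsl,
      RCLike.re_to_complex]
    ring
  have hK0 : (0:ℝ) ≤ K := by rw [hK]; positivity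
  -- the functions of t
  set c : ℝ → ℝ := fun t => Real.sqrt (1 - t ^ 2) with hc
  set Bf : ℝ → ℂ := fun t => ((c t : ℝ) : ℂ) ^ 2 * β₀ + ((c t : ℝ) : ℂ) * (t : ℂ) * b₁
      + ((c t : ℝ) : ℂ) * (t : ℂ) * b₂ + (t : ℂ) ^ 2 * b₃ with hBfd
  set F : ℝ → ℂ := fun t => ((c t : ℝ) : ℂ) * (A + B)
      + (t : ℂ) * (g₃ - l * b₃ - (μ - l) * Bf t) with hFd
  -- the per-t inequality
  have hper : ∀ t ∈ Set.Ioo (0:ℝ) 1,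
      ‖F t‖ ^ 2 ≤ K * (1 - ‖Bf t‖ ^ 2) := by
    intro t ht
    obtain ⟨ht0, ht1⟩ := ht
    have h1t : (0:ℝ) ≤ 1 - t ^ 2 := by nlinarith [sq_nonneg t, sq_nonneg (1 - t)]
    have hc2 : (c t) ^ 2 = 1 - t ^ 2 := by rw [hc]; exact Real.sq_sqrt h1t
    set ζ : H := ((c t : ℝ) : ℂ) • ξ + ((t : ℝ) : ℂ) • η with hζdef
    have hip : ⟪ζ, ζ⟫ = 1 := by
      rw [hζdef]
      simp only [inner_add_left, inner_add_right, inner_smul_left, inner_smul_right,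
        Complex.conj_ofReal, hortho, hba, hξξ, hηη, mul_zero, mul_one, zero_add, add_zero]
      have hr : ((c t) * (c t) + t * t : ℝ) = 1 := by linear_combination hc2
      exact_mod_cast hr
    have hζ1 : ‖ζ‖ = 1 := hnorm_eq_one _ hip
    have hcast : ((c t : ℝ) : ℂ) ^ 2 = 1 - (t : ℂ) ^ 2 := by
      have := congrArg (fun r : ℝ => (r : ℂ)) hc2
      push_cast at this
      exact this
    have hpa : ⟪ζ, a ζ⟫ = (1 - (t:ℂ) ^ 2) * l + (t:ℂ) ^ 2 * μ := by
      rw [hζdef, exp_inner, hax, haηx, haxη, ← hμ, hcast]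
      ring
    have hpb : ⟪ζ, b ζ⟫ = Bf t := by
      rw [hζdef, exp_inner, ← hβ₀, ← hb₁, ← hb₂, ← hb₃, hBfd]
    have hpx : ⟪ζ, x ζ⟫ = ((c t : ℝ) : ℂ) ^ 2 * (l * β₀) + ((c t : ℝ) : ℂ) * (t : ℂ) * g₁
        + ((c t : ℝ) : ℂ) * (t : ℂ) * g₂ + (t : ℂ) ^ 2 * g₃ := by
      rw [hζdef, exp_inner, hg0, ← hg₁, ← hg₂, ← hg₃]
    have hQt := Qkey ⟪ζ, a ζ⟫ ⟪ζ, b ζ⟫ ⟪ζ, x ζ⟫ (hQ ζ hζ1)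
    rw [hpa, hpb, hpx] at hQt
    have hid : ((c t : ℝ) : ℂ) ^ 2 * (l * β₀) + ((c t : ℝ) : ℂ) * (t : ℂ) * g₁
        + ((c t : ℝ) : ℂ) * (t : ℂ) * g₂ + (t : ℂ) ^ 2 * g₃
        - ((1 - (t:ℂ) ^ 2) * l + (t:ℂ) ^ 2 * μ) * Bf t = (t : ℂ) * F t := by
      rw [hBfd, hFd, hA, hB]
      ring
    rw [hid] at hQt
    have habs_t : ‖(t : ℂ) * F t‖ ^ 2 = t ^ 2 * ‖F t‖ ^ 2 := by
      rw [norm_mul, Complex.norm_real, Real.norm_eq_abs, abs_of_pos ht0, mul_pow]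
    rw [habs_t] at hQt
    -- bound on the a-part
    have hpaK : 1 - ‖(1 - (t:ℂ) ^ 2) * l + (t:ℂ) ^ 2 * μ‖ ^ 2 ≤ t ^ 2 * K := by
      have hclμ : ((starRingEnd ℂ) l * μ).re = l.re * μ.re + l.im * μ.im := by
        simp [Complex.mul_re]
      have heq : 1 - Complex.normSq ((1 - (t:ℂ) ^ 2) * l + (t:ℂ) ^ 2 * μ)
          = t ^ 2 * K - t ^ 4 * Complex.normSq (μ - l) := by
        rw [hKval, hclμ]
        simp only [← Complex.ofReal_pow]
        simp only [Complex.normSq_apply, Complex.add_re, Complex.add_im, Complex.mul_re,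
          Complex.mul_im, Complex.sub_re, Complex.sub_im, Complex.one_re, Complex.one_im,
          Complex.ofReal_re, Complex.ofReal_im]
        linear_combination (2 * t ^ 2 - 1) * hlre
      rw [Complex.sq_norm, heq]
      have hnn : (0:ℝ) ≤ t ^ 4 * Complex.normSq (μ - l) :=
        mul_nonneg (by positivity) (Complex.normSq_nonneg _)
      linarith
    have hfinal : t ^ 2 * ‖F t‖ ^ 2 ≤ t ^ 2 * (K * (1 - ‖Bf t‖ ^ 2)) := by
      calc t ^ 2 * ‖F t‖ ^ 2
          ≤ (1 - ‖(1 - (t:ℂ) ^ 2) * l + (t:ℂ) ^ 2 * μ‖ ^ 2)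
            * (1 - ‖Bf t‖ ^ 2) := hQt.1
        _ ≤ (t ^ 2 * K) * (1 - ‖Bf t‖ ^ 2) :=
            mul_le_mul_of_nonneg_right hpaK hQt.2
        _ = t ^ 2 * (K * (1 - ‖Bf t‖ ^ 2)) := by ring
    have ht2 : (0:ℝ) < t ^ 2 := by positivity
    exact le_of_mul_le_mul_left hfinal ht2
  -- take the limit t → 0⁺
  rw [hgA, hgB, mul_comm]
  have hccont : Continuous fun t : ℝ => ((c t : ℝ) : ℂ) := by
    apply Complex.continuous_ofReal.comp
    rw [hc]
    exact Real.continuous_sqrt.comp (continuous_const.sub (continuous_pow 2))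
  have hBfcont : Continuous Bf := by
    rw [hBfd]
    apply Continuous.add
    apply Continuous.add
    apply Continuous.add
    · exact (hccont.pow 2).mul continuous_const
    · exact ((hccont.mul Complex.continuous_ofReal).mul continuous_const)
    · exact ((hccont.mul Complex.continuous_ofReal).mul continuous_const)
    · exact ((Complex.continuous_ofReal.pow 2).mul continuous_const)
  have hFcont : Continuous F := by
    rw [hFd]
    apply Continuous.add
    · exact hccont.mul continuous_const
    · exact Complex.continuous_ofReal.mul
        ((continuous_const.sub continuous_const).sub (continuous_const.mul hBfcont))
  have hc0 : c 0 = 1 := by rw [hc]; norm_num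
  have hF0 : F 0 = A + B := by rw [hFd]; simp [hc0]
  have hBf0 : Bf 0 = β₀ := by rw [hBfd]; simp [hc0]
  have hT1 : Tendsto (fun t => ‖F t‖ ^ 2) (𝓝[>] (0:ℝ))
      (𝓝 (‖A + B‖ ^ 2)) := by
    have hcont : Continuous fun t => ‖F t‖ ^ 2 :=
      (continuous_norm.comp hFcont).pow 2
    have h := hcont.tendsto 0
    simp only [Function.comp, hF0] at h
    exact h.mono_left nhdsWithin_le_nhds
  have hT2 : Tendsto (fun t => K * (1 - ‖Bf t‖ ^ 2)) (𝓝[>] (0:ℝ))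
      (𝓝 (K * (1 - ‖β₀‖ ^ 2))) := by
    have hcont : Continuous fun t => K * (1 - ‖Bf t‖ ^ 2) :=
      continuous_const.mul (continuous_const.sub ((continuous_norm.comp hBfcont).pow 2))
    have h := hcont.tendsto 0
    simp only [Function.comp, hBf0] at h
    exact h.mono_left nhdsWithin_le_nhds
  have hev : (fun t => ‖F t‖ ^ 2) ≤ᶠ[𝓝[>] (0:ℝ)]
      fun t => K * (1 - ‖Bf t‖ ^ 2) := by
    filter_upwards [Ioo_mem_nhdsGT_of_mem (Set.left_mem_Ico.mpr zero_lt_one)] with t ht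
    exact hper t ht
  exact le_of_tendsto_of_tendsto hT1 hT2 hev
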